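/- Let S be an infinite set with a distinguished element 0 ∈ S. For every finite subset A ⊆ V_S and every function ρ : A → ℚ^{>0} such that for all a, a' ∈ A one has ρ(a) ≤ max(d(a,a'), ρ(a')) and d(a,a') ≤ max(ρ(a), ρ(a')), there exists v ∈ V_S with d(v, a) = ρ(a) for every a ∈ A. (That is, V_S realizes every one-point ℚ^{≥0}-valued ultrametric extension of each of its finite subspaces.) -/
import Mathlib


open scoped NNRat

noncomputable section

/-- The positive rationals, as a subtype of `ℚ≥0`. -/
abbrev Qpos : Type := {q : ℚ≥0 // 0 < q}

/-- The support of `f : Qpos → S` relative to the distinguished element `s₀`. -/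
def VSupp {S : Type*} (s₀ : S) (f : Qpos → S) : Set Qpos := {r | f r ≠ s₀}

/-- `V_S`: functions `ℚ^{>0} → S` with finite support. -/
def VS (S : Type*) (s₀ : S) : Type _ := {f : Qpos → S // (VSupp s₀ f).Finite}

open Classical in
/-- The `ℚ≥0`-valued ultrametric: the greatest coordinate at which `f` and `g`
differ, and `0` if there is none (in particular `qdist f f = 0`). -/
def qdist {S : Type*} (f g : Qpos → S) : ℚ≥0 :=
  if h : ∃ m : ℚ≥0, IsGreatest {r : ℚ≥0 | ∃ hr : 0 < r, f ⟨r, hr⟩ ≠ g ⟨r, hr⟩} m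
  then h.choose else 0

lemma qdist_isGreatest {S : Type*} {f g : Qpos → S}
    (h : ∃ m : ℚ≥0, IsGreatest {r : ℚ≥0 | ∃ hr : 0 < r, f ⟨r, hr⟩ ≠ g ⟨r, hr⟩} m) :
    IsGreatest {r : ℚ≥0 | ∃ hr : 0 < r, f ⟨r, hr⟩ ≠ g ⟨r, hr⟩} (qdist f g) := by
  unfold qdist
  rw [dif_pos h]
  exact h.choose_spec

lemma qdist_eq_of {S : Type*} {f g : Qpos → S} {m : ℚ≥0} (hm : 0 < m)
    (hne : f ⟨m, hm⟩ ≠ g ⟨m, hm⟩) (hab : ∀ r : Qpos, m < r.1 → f r = g r) :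
    qdist f g = m := by
  have hG : IsGreatest {r : ℚ≥0 | ∃ hr : 0 < r, f ⟨r, hr⟩ ≠ g ⟨r, hr⟩} m := by
    constructor
    · exact ⟨hm, hne⟩
    · rintro r ⟨hr, hfg⟩
      by_contra h
      exact hfg (hab ⟨r, hr⟩ (lt_of_not_ge h))
  exact (qdist_isGreatest ⟨m, hG⟩).unique hG

lemma qdist_spec_of_pos {S : Type*} {f g : Qpos → S} (hm : 0 < qdist f g) :
    IsGreatest {r : ℚ≥0 | ∃ hr : 0 < r, f ⟨r, hr⟩ ≠ g ⟨r, hr⟩} (qdist f g) := by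
  by_cases h : ∃ m : ℚ≥0, IsGreatest {r : ℚ≥0 | ∃ hr : 0 < r, f ⟨r, hr⟩ ≠ g ⟨r, hr⟩} m
  · exact qdist_isGreatest h
  · exfalso
    rw [qdist, dif_neg h] at hm
    exact lt_irrefl 0 hm

/-- For differing coordinates above the distance, finite-support functions agree. -/
lemma eq_of_qdist_lt {S : Type*} {s₀ : S} {f g : Qpos → S}
    (hf : (VSupp s₀ f).Finite) (hg : (VSupp s₀ g).Finite)
    (r : Qpos) (h : qdist f g < r.1) : f r = g r := by
  by_contra hne
  have hTfin : {x : ℚ≥0 | ∃ hx : 0 < x, f ⟨x, hx⟩ ≠ g ⟨x, hx⟩}.Finite := by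
    apply Set.Finite.subset ((hf.union hg).image Subtype.val)
    rintro x ⟨hx, hfg⟩
    by_cases hfx : f ⟨x, hx⟩ = s₀
    · exact ⟨⟨x, hx⟩, Or.inr (fun hgs => hfg (hfx.trans hgs.symm)), rfl⟩
    · exact ⟨⟨x, hx⟩, Or.inl hfx, rfl⟩
  have hr : r.1 ∈ {x : ℚ≥0 | ∃ hx : 0 < x, f ⟨x, hx⟩ ≠ g ⟨x, hx⟩} := ⟨r.2, hne⟩
  have hne' : hTfin.toFinset.Nonempty := ⟨r.1, hTfin.mem_toFinset.2 hr⟩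
  have hG : IsGreatest {x : ℚ≥0 | ∃ hx : 0 < x, f ⟨x, hx⟩ ≠ g ⟨x, hx⟩}
      (hTfin.toFinset.max' hne') := by
    constructor
    · exact hTfin.mem_toFinset.1 (hTfin.toFinset.max'_mem hne')
    · intro x hx
      exact hTfin.toFinset.le_max' x (hTfin.mem_toFinset.2 hx)
  have h1 : r.1 ≤ qdist f g := (qdist_isGreatest ⟨_, hG⟩).2 hr
  exact absurd h (not_lt.2 h1)

/-- `V_S` realizes every one-point `ℚ≥0`-valued ultrametric extension of each of its
finite subspaces: for finite `A ⊆ V_S` and prescribed positive distances `ρ`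
satisfying the two ultrametric compatibility inequalities, some `v ∈ V_S` realizes
them. -/
theorem stmt9 {S : Type*} [Infinite S] (s₀ : S)
    (A : Set (VS S s₀)) (hA : A.Finite) (ρ : VS S s₀ → ℚ≥0)
    (hρpos : ∀ a ∈ A, 0 < ρ a)
    (h1 : ∀ a ∈ A, ∀ a' ∈ A, ρ a ≤ max (qdist a.1 a'.1) (ρ a'))
    (h2 : ∀ a ∈ A, ∀ a' ∈ A, qdist a.1 a'.1 ≤ max (ρ a) (ρ a')) :
    ∃ v : VS S s₀, ∀ a ∈ A, qdist v.1 a.1 = ρ a := by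
  classical
  rcases Set.eq_empty_or_nonempty A with rfl | hAne
  · refine ⟨⟨fun _ => s₀, by simp [VSupp]⟩, ?_⟩
    intro a ha
    exact absurd ha (Set.notMem_empty a)
  obtain ⟨a₀, ha₀, hmin⟩ := Set.exists_min_image A ρ hA hAne
  set m : ℚ≥0 := ρ a₀ with hmdef
  have hm : 0 < m := hρpos a₀ ha₀
  -- choose a value different from all a.1 ⟨m, hm⟩, a ∈ A
  obtain ⟨s, hs⟩ := Infinite.exists_notMem_finset
    ((hA.image (fun a : VS S s₀ => a.1 ⟨m, hm⟩)).toFinset)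
  have hsne : ∀ a ∈ A, s ≠ a.1 ⟨m, hm⟩ := by
    intro a ha hcon
    exact hs ((Set.Finite.mem_toFinset _).2 ⟨a, ha, hcon.symm⟩)
  -- define v
  set vf : Qpos → S := fun r => if m < r.1 then a₀.1 r else if r.1 = m then s else s₀
    with hvf
  have hvhigh : ∀ r : Qpos, m < r.1 → vf r = a₀.1 r := by
    intro r hr
    simp only [hvf, if_pos hr]
  have hvm : vf ⟨m, hm⟩ = s := by
    simp [hvf]
  have hvfin : (VSupp s₀ vf).Finite := by
    apply Set.Finite.subset (a₀.2.union (Set.finite_singleton ⟨m, hm⟩))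
    intro r hr
    by_cases h : m < r.1
    · left
      show a₀.1 r ≠ s₀
      rw [← hvhigh r h]
      exact hr
    · by_cases h' : r.1 = m
      · right
        exact Subtype.ext h'
      · exfalso
        apply hr
        simp only [hvf, if_neg h, if_neg h']
  refine ⟨⟨vf, hvfin⟩, ?_⟩
  intro a ha
  have hma : m ≤ ρ a := hmin a ha
  rcases eq_or_lt_of_le hma with heq | hlt
  · -- ρ a = m : v differs from a at m, agrees above
    rw [← heq]
    apply qdist_eq_of hm
    · show vf ⟨m, hm⟩ ≠ a.1 ⟨m, hm⟩
      rw [hvm]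
      exact hsne a ha
    · intro r hr
      show vf r = a.1 r
      rw [hvhigh r hr]
      have hd : qdist a.1 a₀.1 ≤ m := by
        have := h2 a ha a₀ ha₀
        rwa [← heq, max_self] at this
      exact (eq_of_qdist_lt a.2 a₀.2 r (lt_of_le_of_lt hd hr)).symm
  · -- m < ρ a : then qdist a a₀ = ρ a
    have hda : qdist a.1 a₀.1 = ρ a := by
      have hle : qdist a.1 a₀.1 ≤ ρ a := by
        have := h2 a ha a₀ ha₀
        rwa [max_eq_left hma] at this
      have hge : ρ a ≤ qdist a.1 a₀.1 := by
        have := h1 a ha a₀ ha₀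
        rcases le_max_iff.1 this with h | h
        · exact h
        · exact absurd h (not_le.2 hlt)
      exact le_antisymm hle hge
    have hρa : 0 < ρ a := hρpos a ha
    have hspec := qdist_spec_of_pos (f := a.1) (g := a₀.1) (by rw [hda]; exact hρa)
    rw [hda] at hspec
    obtain ⟨⟨hpos, hneq⟩, hub⟩ := hspec
    apply qdist_eq_of hρa
    · show vf ⟨ρ a, hρa⟩ ≠ a.1 ⟨ρ a, hρa⟩
      rw [hvhigh ⟨ρ a, hρa⟩ hlt]
      exact fun hcon => hneq hcon.symm
    · intro r hr
      show vf r = a.1 r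
      rw [hvhigh r (lt_trans hlt hr)]
      by_contra hcon
      have : r.1 ∈ {x : ℚ≥0 | ∃ hx : 0 < x, a.1 ⟨x, hx⟩ ≠ a₀.1 ⟨x, hx⟩} :=
        ⟨r.2, fun h => hcon h.symm⟩
      exact absurd (hub this) (not_le.2 hr)
  end
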